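/- Let E = EuclideanSpace ℝ (Fin 3), let t, m, n : ℝ → E, let κ_g, κ_n, τ_g, g_t, g_m : ℝ → ℝ, and let α ∈ ℝ. Assume t, m, g_t, g_m are differentiable at α; that at α one has ⟪t α, n α⟫ = 0, ⟪m α, n α⟫ = 0, ⟪n α, n α⟫ = 1; and that the structure equations deriv t α = κ_g α • m α + κ_n α • n α and deriv m α = −(κ_g α) • t α + τ_g α • n α hold. Define g : ℝ → E by g s = g_t s • t s + g_m s • m s. If ⟪deriv g α, n α⟫ = 0, then g_t α * κ_n α + g_m α * τ_g α = 0. -/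

import Mathlib

open scoped RealInnerProductSpace

/-- Equation (K=0) of the paper: the developability condition `g'·n = 0` for the
ruling direction `g = g_t t + g_m m` along the Darboux frame `{t, m, n}` implies
`g_t κ_n + g_m τ_g = 0`. -/
theorem stmt0
    (t m n : ℝ → EuclideanSpace ℝ (Fin 3))
    (κg κn τg gt gm : ℝ → ℝ) (α : ℝ)
    (ht : DifferentiableAt ℝ t α) (hm : DifferentiableAt ℝ m α)
    (hgt : DifferentiableAt ℝ gt α) (hgm : DifferentiableAt ℝ gm α)
    (htn : ⟪t α, n α⟫ = 0) (hmn : ⟪m α, n α⟫ = 0) (hnn : ⟪n α, n α⟫ = 1)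
    (hderivt : deriv t α = κg α • m α + κn α • n α)
    (hderivm : deriv m α = -(κg α) • t α + τg α • n α)
    (g : ℝ → EuclideanSpace ℝ (Fin 3))
    (hg : ∀ s, g s = gt s • t s + gm s • m s)
    (hgn : ⟪deriv g α, n α⟫ = 0) :
    gt α * κn α + gm α * τg α = 0 := by
  have hgeq : g = fun s => gt s • t s + gm s • m s := funext hg
  have hdg : deriv g α =
      (deriv gt α • t α + gt α • deriv t α) +
      (deriv gm α • m α + gm α • deriv m α) := by
    rw [hgeq]
    rw [deriv_fun_add (f := fun y => gt y • t y) (g := fun y => gm y • m y) (hgt.smul ht) (hgm.smul hm), deriv_fun_smul hgt ht, deriv_fun_smul hgm hm]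
    module
  rw [hdg, hderivt, hderivm] at hgn
  simp only [inner_add_left, inner_smul_left, inner_add_left, real_inner_smul_left,
    htn, hmn, hnn, inner_neg_left, conj_trivial] at hgn
  -- hgn should now be an algebraic identity
  linarith [hgn]
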